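/- Let λ be a hook-quotient partition of e-weight w, let Γ ⊆ {1,...,w}, and write ε_Γ^λ = Σ_{a∈Γ} ε_a^λ = (z₁, ..., z_w) ∈ ℤ^w. Then -2 ≤ z_i ≤ 1 for all i. -/
import Mathlib


/-- The set of β-numbers of a partition given by its (0-indexed) parts function. -/
def betaSet (lam : ℕ → ℕ) : Set ℤ :=
  {x : ℤ | ∃ i : ℕ, x = (lam i : ℤ) - ((i : ℤ) + 1)}

/-- `wt e B b`: number of unoccupied positions above `b` on its runner. -/
noncomputable def wt (e : ℕ) (B : Set ℤ) (b : ℤ) : ℕ :=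
  Set.ncard {x : ℤ | x < b ∧ (e : ℤ) ∣ b - x ∧ x ∉ B}

/-- `(b; q)` is a bead movement: `b ∈ B`, `q = b - i·e` for some `0 ≤ i < wt e B b`. -/
def IsBM (e : ℕ) (B : Set ℤ) (b q : ℤ) : Prop :=
  b ∈ B ∧ ∃ i : ℕ, q = b - (i : ℤ) * e ∧ i < wt e B b

/-- Every component of the `e`-quotient is a hook. -/
def HookQuotient (e : ℕ) (B : Set ℤ) : Prop :=
  ∀ b b' : ℤ, b ∈ B → b' ∈ B → (e : ℤ) ∣ b - b' →
    2 ≤ wt e B b → 2 ≤ wt e B b' → b = b'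

/-- The `i`-th and `j`-th bead movements lie on the same runner. -/
def SameRunner (e : ℕ) {w : ℕ} (bm : Fin w → ℤ × ℤ) (i j : Fin w) : Prop :=
  (e : ℤ) ∣ (bm j).2 - (bm i).2

/-- `p` is the distinguished index of the runner class of `i`: the earliest (final)
bead movement of the bottom bead of that runner. -/
def IsPivot (e : ℕ) {w : ℕ} (bm : Fin w → ℤ × ℤ) (i p : Fin w) : Prop :=
  SameRunner e bm i p ∧
  (∃ mx, SameRunner e bm i mx ∧ (∀ k, SameRunner e bm i k → k ≤ mx) ∧
    (bm p).1 = (bm mx).1) ∧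
  (∀ p', SameRunner e bm i p' → (bm p').1 = (bm p).1 → p ≤ p')

/-- `eps` is the family of `λ`-modified basis vectors: `eps i = e_i` if `i` is the
pivot of its runner class, and `eps i = e_i - e_j` where `j` is the neighbour of `i`
in its runner class on the side of the pivot. -/
def ModifiedBasisSpec (e : ℕ) {w : ℕ} (bm : Fin w → ℤ × ℤ)
    (eps : Fin w → Fin w → ℤ) : Prop :=
  ∀ i : Fin w,
    (IsPivot e bm i i → eps i = Pi.single i (1 : ℤ)) ∧
    (∀ p, IsPivot e bm i p → i < p →
      ∃ j, SameRunner e bm i j ∧ i < j ∧ (∀ k, SameRunner e bm i k → i < k → j ≤ k) ∧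
        eps i = Pi.single i (1 : ℤ) - Pi.single j (1 : ℤ)) ∧
    (∀ p, IsPivot e bm i p → p < i →
      ∃ j, SameRunner e bm i j ∧ j < i ∧ (∀ k, SameRunner e bm i k → k < i → k ≤ j) ∧
        eps i = Pi.single i (1 : ℤ) - Pi.single j (1 : ℤ))

/-- For any hook-quotient partition `λ` of `e`-weight `w` and any `Γ ⊆ [1,w]`, every
coordinate of `ε_Γ^λ = Σ_{a ∈ Γ} ε_a^λ` lies in `[-2, 1]`. -/
theorem stmt_8 (e : ℕ) (he : 2 ≤ e) (w : ℕ) (lam : ℕ → ℕ)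
    (hanti : Antitone lam) (hev : ∃ N, ∀ i ≥ N, lam i = 0)
    (hquot : HookQuotient e (betaSet lam))
    (bm : Fin w → ℤ × ℤ)
    (hbm1 : ∀ i, IsBM e (betaSet lam) (bm i).1 (bm i).2)
    (hbm2 : ∀ b q : ℤ, IsBM e (betaSet lam) b q → ∃ i, bm i = (b, q))
    (hbm3 : StrictMono fun i => (bm i).2)
    (eps : Fin w → Fin w → ℤ)
    (heps : ModifiedBasisSpec e bm eps)
    (Γ : Finset (Fin w)) :
    ∀ i : Fin w, -2 ≤ (∑ a ∈ Γ, eps a) i ∧ (∑ a ∈ Γ, eps a) i ≤ 1 := by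

  classical
  -- Every index has a pivot.
  have hpiv : ∀ a : Fin w, ∃ p, IsPivot e bm a p := by
    intro a
    have haS : SameRunner e bm a a := by simp [SameRunner]
    set S : Finset (Fin w) := Finset.univ.filter (fun k => SameRunner e bm a k) with hS
    have hSne : S.Nonempty := ⟨a, by simp [hS, haS]⟩
    set mx := S.max' hSne with hmx
    have hmxS : mx ∈ S := S.max'_mem hSne
    have hmxR : SameRunner e bm a mx := by
      have h := hmxS; simp [hS] at h; exact h
    set T : Finset (Fin w) := S.filter (fun k => (bm k).1 = (bm mx).1) with hT
    have hTne : T.Nonempty := ⟨mx, by simp [hT, hmxS]⟩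
    set p := T.min' hTne with hp
    have hpT : p ∈ T := T.min'_mem hTne
    have hpR : SameRunner e bm a p := by
      have h := hpT; simp [hT, hS] at h; exact h.1
    have hpb : (bm p).1 = (bm mx).1 := by
      have h := hpT; simp [hT, hS] at h; exact h.2
    refine ⟨p, hpR, ⟨mx, hmxR, ?_, hpb⟩, ?_⟩
    · intro k hk
      exact S.le_max' k (by simp [hS, hk])
    · intro p' hp' hb'
      exact T.min'_le p' (by simp [hT, hS, hp', hb'.trans hpb])
  -- Shape of eps.
  have hshape : ∀ a : Fin w, eps a = Pi.single a 1 ∨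
      ∃ j, SameRunner e bm a j ∧
        ((a < j ∧ ∀ k, SameRunner e bm a k → a < k → j ≤ k) ∨
         (j < a ∧ ∀ k, SameRunner e bm a k → k < a → k ≤ j)) ∧
        eps a = Pi.single a 1 - Pi.single j 1 := by
    intro a
    obtain ⟨p, hp⟩ := hpiv a
    rcases lt_trichotomy a p with h | h | h
    · obtain ⟨j, hj1, hj2, hj3, hj4⟩ := (heps a).2.1 p hp h
      exact Or.inr ⟨j, hj1, Or.inl ⟨hj2, hj3⟩, hj4⟩
    · exact Or.inl ((heps a).1 (by rwa [← h] at hp))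
    · obtain ⟨j, hj1, hj2, hj3, hj4⟩ := (heps a).2.2 p hp h
      exact Or.inr ⟨j, hj1, Or.inr ⟨hj2, hj3⟩, hj4⟩
  intro i
  set P1 : Fin w → Prop := fun a => SameRunner e bm a i ∧ a < i ∧
    (∀ k, SameRunner e bm a k → a < k → i ≤ k) with hP1
  set P2 : Fin w → Prop := fun a => SameRunner e bm a i ∧ i < a ∧
    (∀ k, SameRunner e bm a k → k < a → k ≤ i) with hP2
  have hsum : (∑ a ∈ Γ, eps a) i = ∑ a ∈ Γ, eps a i := by simp
  -- upper pointwise bound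
  have hup : ∀ a : Fin w, eps a i ≤ (Pi.single a 1 : Fin w → ℤ) i := by
    intro a
    rcases hshape a with h | ⟨j, hjR, hjc, hje⟩
    · rw [h]
    · rw [hje]
      simp only [Pi.sub_apply, Pi.single_apply]
      split_ifs <;> norm_num
  -- lower pointwise bound
  have hlow : ∀ a : Fin w, (if P1 a ∨ P2 a then (-1:ℤ) else 0) ≤ eps a i := by
    intro a
    rcases hshape a with h | ⟨j, hjR, hjc, hje⟩
    · have h0 : (0:ℤ) ≤ eps a i := by
        rw [h, Pi.single_apply]; split <;> norm_num
      split <;> linarith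
    · rw [hje]
      simp only [Pi.sub_apply, Pi.single_apply]
      by_cases hji : j = i
      · have hP : P1 a ∨ P2 a := by
          rcases hjc with ⟨hlt, hall⟩ | ⟨hlt, hall⟩
          · exact Or.inl ⟨hji ▸ hjR, hji ▸ hlt, fun k h1 h2 => hji ▸ hall k h1 h2⟩
          · exact Or.inr ⟨hji ▸ hjR, hji ▸ hlt, fun k h1 h2 => hji ▸ hall k h1 h2⟩
        rw [if_pos hP]
        split_ifs <;> norm_num
      · have : ¬ i = j := fun h => hji h.symm
        rw [if_neg this]
        split_ifs <;> norm_num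
  have hcard1 : (Γ.filter P1).card ≤ 1 := by
    rw [Finset.card_le_one]
    intro a ha b hb
    simp only [Finset.mem_filter, hP1] at ha hb
    by_contra hne
    have runner : ∀ x y : Fin w, SameRunner e bm x i → SameRunner e bm y i →
        SameRunner e bm x y := by
      intro x y hx hy
      have hd := dvd_sub hx hy
      have heq : ((bm i).2 - (bm x).2) - ((bm i).2 - (bm y).2)
          = (bm y).2 - (bm x).2 := by ring
      rwa [heq] at hd
    rcases lt_or_gt_of_ne hne with h | h
    · have hab := runner a b ha.2.1 hb.2.1
      exact absurd (ha.2.2.2 b hab h) (not_le.mpr hb.2.2.1)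
    · have hba := runner b a hb.2.1 ha.2.1
      exact absurd (hb.2.2.2 a hba h) (not_le.mpr ha.2.2.1)
  have hcard2 : (Γ.filter P2).card ≤ 1 := by
    rw [Finset.card_le_one]
    intro a ha b hb
    simp only [Finset.mem_filter, hP2] at ha hb
    by_contra hne
    have runner : ∀ x y : Fin w, SameRunner e bm x i → SameRunner e bm y i →
        SameRunner e bm x y := by
      intro x y hx hy
      have hd := dvd_sub hx hy
      have heq : ((bm i).2 - (bm x).2) - ((bm i).2 - (bm y).2)
          = (bm y).2 - (bm x).2 := by ring
      rwa [heq] at hd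
    rcases lt_or_gt_of_ne hne with h | h
    · have hba := runner b a hb.2.1 ha.2.1
      exact absurd (hb.2.2.2 a hba h) (not_le.mpr ha.2.2.1)
    · have hab := runner a b ha.2.1 hb.2.1
      exact absurd (ha.2.2.2 b hab h) (not_le.mpr hb.2.2.1)
  have hcard : (Γ.filter (fun a => P1 a ∨ P2 a)).card ≤ 2 := by
    calc (Γ.filter (fun a => P1 a ∨ P2 a)).card
        ≤ (Γ.filter P1 ∪ Γ.filter P2).card := Finset.card_le_card (by
          intro a ha
          simp only [Finset.mem_filter, Finset.mem_union] at *
          tauto)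
      _ ≤ (Γ.filter P1).card + (Γ.filter P2).card := Finset.card_union_le _ _
      _ ≤ 2 := by omega
  constructor
  · rw [hsum]
    have h1 : ∑ a ∈ Γ, (if P1 a ∨ P2 a then (-1:ℤ) else 0) ≤ ∑ a ∈ Γ, eps a i :=
      Finset.sum_le_sum fun a _ => hlow a
    have h2 : ∑ a ∈ Γ, (if P1 a ∨ P2 a then (-1:ℤ) else 0)
        = -((Γ.filter (fun a => P1 a ∨ P2 a)).card : ℤ) := by
      rw [← Finset.sum_filter]
      simp [mul_comm]
    have h3 : (-2:ℤ) ≤ -((Γ.filter (fun a => P1 a ∨ P2 a)).card : ℤ) := by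
      have := hcard
      omega
    linarith
  · rw [hsum]
    have h1 : ∑ a ∈ Γ, eps a i ≤ ∑ a ∈ Γ, (Pi.single a 1 : Fin w → ℤ) i :=
      Finset.sum_le_sum fun a _ => hup a
    have h2 : ∑ a ∈ Γ, (Pi.single a 1 : Fin w → ℤ) i = if i ∈ Γ then 1 else 0 := by
      simp [Pi.single_apply]
    have h3 : (if i ∈ Γ then (1:ℤ) else 0) ≤ 1 := by split <;> norm_num
    linarith
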